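/- Let z₁, …, z_k be independent random variables each uniform on the interval [α - 1/2, 1/2 - α], where 0 < α < 1/2, and let z̄ denote their mean. Then for any β > 0, E[exp(-β·∑_{i=1}^k (zᵢ - z̄)²)] ≤ k^{1/2}·(π/((1-2α)²β))^{(k-1)/2}. -/

import Mathlib

open MeasureTheory Real ProbabilityTheory

lemma sum_sq_dev (k : ℕ) (hk : 1 ≤ k) (x : Fin k → ℝ) :
    ∑ i, (x i - (∑ j, x j)/(k:ℝ))^2 = (∑ i, (x i)^2) - ((∑ i, x i)/Real.sqrt k)^2 := by
  have hk0 : (0:ℝ) < k := by exact_mod_cast hk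
  have hsq : Real.sqrt k ^ 2 = (k:ℝ) := Real.sq_sqrt hk0.le
  have h1 : ∑ i, (x i - (∑ j, x j)/(k:ℝ))^2
      = ∑ i, ((x i)^2 - 2*((∑ j, x j)/(k:ℝ))*(x i) + ((∑ j, x j)/(k:ℝ))^2) := by
    refine Finset.sum_congr rfl fun i _ => by ring
  rw [h1, Finset.sum_add_distrib, Finset.sum_sub_distrib, ← Finset.mul_sum,
    Finset.sum_const, Finset.card_univ, Fintype.card_fin, div_pow, div_pow, hsq]
  field_simp
  push_cast
  have hkk : (k:ℝ)^2 * (k:ℝ)⁻¹^2 = 1 := by rw [← mul_pow, mul_inv_cancel₀ hk0.ne', one_pow]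
  linear_combination (∑ j, x j)^2 * hkk

lemma key_rot (k : ℕ) (hk : 1 ≤ k) (β : ℝ) (hβ : 0 < β) (c' : ℝ) (hc' : 0 ≤ c') :
    ∫⁻ x : Fin k → ℝ, ENNReal.ofReal
        ((Set.Icc (-c') c').indicator (fun _ => (1:ℝ)) ((∑ i, x i)/Real.sqrt k)
          * Real.exp (-β * ((∑ i, (x i)^2) - ((∑ i, x i)/Real.sqrt k)^2)))
      = ENNReal.ofReal ((2*c') * Real.sqrt (Real.pi/β) ^ (k-1)) := by
  haveI : NeZero k := ⟨by omega⟩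
  have hk0 : (0:ℝ) < k := by exact_mod_cast hk
  have hsk : (0:ℝ) < Real.sqrt k := Real.sqrt_pos.mpr hk0
  -- the unit vector u
  set u : EuclideanSpace ℝ (Fin k) := WithLp.toLp 2 (fun _ => (Real.sqrt k)⁻¹) with hu
  have hnormu : ‖u‖ = 1 := by
    rw [EuclideanSpace.norm_eq]
    simp only [hu, PiLp.toLp_apply]
    rw [Finset.sum_const, Finset.card_univ, Fintype.card_fin]
    rw [nsmul_eq_mul, Real.norm_eq_abs, sq_abs, inv_pow, Real.sq_sqrt hk0.le,
      mul_inv_cancel₀ hk0.ne', Real.sqrt_one]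
  -- orthonormal basis with b 0 = u
  have hON : Orthonormal ℝ (({0} : Set (Fin k)).restrict (fun _ => u)) := by
    constructor
    · intro i; exact hnormu
    · intro i j hij
      exfalso
      apply hij
      rcases i with ⟨i, hi⟩; rcases j with ⟨j, hj⟩
      simp only [Set.mem_singleton_iff] at hi hj
      subst hi; subst hj; rfl
  obtain ⟨b, hb⟩ := hON.exists_orthonormalBasis_extension_of_card_eq
    (by simp [finrank_euclideanSpace]) 
  have hb0 : b 0 = u := hb 0 rfl
  -- measurability
  have msum : Measurable fun x : Fin k → ℝ => ∑ i, x i :=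
    Finset.measurable_sum _ fun i _ => measurable_pi_apply i
  have msumsq : Measurable fun x : Fin k → ℝ => ∑ i, (x i)^2 :=
    Finset.measurable_sum _ fun i _ => (measurable_pi_apply i).pow_const 2
  set F : (Fin k → ℝ) → ENNReal := fun x => ENNReal.ofReal
      ((Set.Icc (-c') c').indicator (fun _ => (1:ℝ)) ((∑ i, x i)/Real.sqrt k)
        * Real.exp (-β * ((∑ i, (x i)^2) - ((∑ i, x i)/Real.sqrt k)^2))) with hF
  have hFmeas : Measurable F := by
    apply Measurable.ennreal_ofReal
    apply Measurable.mul
    · exact (Measurable.indicator measurable_const measurableSet_Icc).comp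
        (msum.div_const _)
    · exact (((msumsq.sub ((msum.div_const _).pow_const 2)).const_mul (-β)).exp)
  set e := (MeasurableEquiv.toLp 2 (Fin k → ℝ)).symm with he
  have hA : ∫⁻ x : Fin k → ℝ, F x = ∫⁻ v, F (e v) :=
    ((EuclideanSpace.volume_preserving_symm_measurableEquiv_toLp (Fin k)).lintegral_comp hFmeas).symm
  have hB : ∫⁻ v, F (e v) = ∫⁻ y, F (e (b.repr.symm y)) :=
    (b.measurePreserving_repr_symm.lintegral_comp (hFmeas.comp e.measurable)).symm
  -- pointwise evaluation after rotation
  have hptA : ∀ y : EuclideanSpace ℝ (Fin k), F (e (b.repr.symm y)) =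
      ENNReal.ofReal ((Set.Icc (-c') c').indicator (fun _ => (1:ℝ)) (y 0)
        * Real.exp (-β * (∑ i ∈ Finset.univ.erase 0, (y i)^2))) := by
    intro y
    set v := b.repr.symm y with hv
    have hinner : ((∑ i, v i) : ℝ) / Real.sqrt k = y 0 := by
      have h1 : y 0 = b.repr v 0 := by rw [hv, LinearIsometryEquiv.apply_symm_apply]
      rw [h1, b.repr_apply_apply, hb0, PiLp.inner_apply]
      simp only [RCLike.inner_apply, conj_trivial]
      have : ∀ i, (v i) * u i = (Real.sqrt k)⁻¹ * v i := fun i => by rw [mul_comm]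
      rw [Finset.sum_congr rfl fun i _ => this i, ← Finset.mul_sum, div_eq_inv_mul]
    have hnorm : (∑ i, (v i)^2) = ∑ i, (y i)^2 := by
      have l1 : ∀ w : EuclideanSpace ℝ (Fin k), ∑ i, (w i)^2 = ‖w‖^2 := by
        intro w
        rw [EuclideanSpace.norm_eq, Real.sq_sqrt (by positivity)]
        refine Finset.sum_congr rfl fun i _ => by rw [Real.norm_eq_abs, sq_abs]
      rw [l1 v, l1 y, hv, LinearIsometryEquiv.norm_map]
    have herase : (∑ i, (y i)^2) - (y 0)^2 = ∑ i ∈ Finset.univ.erase 0, (y i)^2 := by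
      rw [← Finset.add_sum_erase _ _ (Finset.mem_univ 0)]
      ring
    simp only [hF]
    congr 1
    have h4 : (∑ i, e v i) = ∑ i, v i := Finset.sum_congr rfl fun i _ => rfl
    have h5 : (∑ i, (e v i)^2) = ∑ i, (v i)^2 := Finset.sum_congr rfl fun i _ => rfl
    rw [h4, h5, hinner, hnorm, herase]
  -- product form
  set Gf : Fin k → ℝ → ℝ := fun i t =>
    if i = 0 then (Set.Icc (-c') c').indicator (fun _ => (1:ℝ)) t
    else Real.exp (-β * t^2) with hGf
  have hGf0 : Gf 0 = (Set.Icc (-c') c').indicator (fun _ => (1:ℝ)) := by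
    funext t; simp [hGf]
  have hGfne : ∀ i : Fin k, i ≠ 0 → Gf i = fun t => Real.exp (-β * t^2) := by
    intro i hi; funext t; simp [hGf, hi]
  have hprod : ∀ w : Fin k → ℝ,
      (∏ i, Gf i (w i)) = (Set.Icc (-c') c').indicator (fun _ => (1:ℝ)) (w 0)
        * Real.exp (-β * (∑ i ∈ Finset.univ.erase 0, (w i)^2)) := by
    intro w
    rw [← Finset.mul_prod_erase _ _ (Finset.mem_univ 0), hGf0]
    congr 1
    rw [Finset.mul_sum, Real.exp_sum]
    exact Finset.prod_congr rfl fun i hi => by rw [hGfne i (Finset.ne_of_mem_erase hi)]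
  have hptB : ∀ y : EuclideanSpace ℝ (Fin k), F (e (b.repr.symm y)) =
      ENNReal.ofReal (∏ i, Gf i (e y i)) := by
    intro y
    rw [hptA y, hprod]
    rfl
  have hΦmeas : Measurable fun w : Fin k → ℝ => ENNReal.ofReal (∏ i, Gf i (w i)) := by
    apply Measurable.ennreal_ofReal
    apply Finset.measurable_prod
    intro i _
    rcases eq_or_ne i 0 with h | h
    · subst h
      rw [hGf0]
      exact (Measurable.indicator measurable_const measurableSet_Icc).comp
        (measurable_pi_apply _)
    · rw [hGfne i h]
      fun_prop
  have hC : ∫⁻ y, F (e (b.repr.symm y)) = ∫⁻ w : Fin k → ℝ, ENNReal.ofReal (∏ i, Gf i (w i)) := by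
    rw [show (fun y : EuclideanSpace ℝ (Fin k) => F (e (b.repr.symm y)))
        = fun y => ENNReal.ofReal (∏ i, Gf i (e y i)) from funext hptB]
    exact (EuclideanSpace.volume_preserving_symm_measurableEquiv_toLp (Fin k)).lintegral_comp hΦmeas
  -- integrate the product
  have hindint : Integrable ((Set.Icc (-c') c').indicator (fun _ => (1:ℝ))) := by
    rw [integrable_indicator_iff measurableSet_Icc]
    refine (integrableOn_const_iff (C := (1:ℝ))).mpr (Or.inr ?_)
    rw [Real.volume_Icc]; exact ENNReal.ofReal_lt_top
  have hint : ∀ i, Integrable (Gf i) := by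
    intro i
    rcases eq_or_ne i 0 with h | h
    · subst h; rw [hGf0]; exact hindint
    · rw [hGfne i h]; exact integrable_exp_neg_mul_sq hβ
  have hintP : Integrable (fun w : Fin k → ℝ => ∏ i, Gf i (w i)) :=
    Integrable.fintype_prod hint
  have hGfnn : ∀ i t, 0 ≤ Gf i t := by
    intro i t
    rcases eq_or_ne i 0 with h | h
    · subst h; rw [hGf0]; exact Set.indicator_nonneg (fun _ _ => zero_le_one) _
    · rw [hGfne i h]; positivity
  have hnnP : 0 ≤ᶠ[ae (volume : Measure (Fin k → ℝ))] fun w => ∏ i, Gf i (w i) :=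
    Filter.Eventually.of_forall fun w => Finset.prod_nonneg fun i _ => hGfnn i (w i)
  have hD : ∫⁻ w : Fin k → ℝ, ENNReal.ofReal (∏ i, Gf i (w i))
      = ENNReal.ofReal (∫ w : Fin k → ℝ, ∏ i, Gf i (w i)) :=
    (ofReal_integral_eq_lintegral_ofReal hintP hnnP).symm
  have hE : (∫ w : Fin k → ℝ, ∏ i, Gf i (w i)) = (2*c') * Real.sqrt (Real.pi/β) ^ (k-1) := by
    rw [MeasureTheory.integral_fintype_prod_volume_eq_prod (𝕜 := ℝ) Gf]
    rw [← Finset.mul_prod_erase _ _ (Finset.mem_univ 0)]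
    congr 1
    · rw [hGf0, MeasureTheory.integral_indicator_const (1:ℝ) measurableSet_Icc,
        Real.volume_real_Icc_of_le (by linarith), smul_eq_mul, mul_one]
      ring
    · have hcongr : ∀ i ∈ Finset.univ.erase (0 : Fin k),
          (∫ t : ℝ, Gf i t) = Real.sqrt (Real.pi/β) := by
        intro i hi
        rw [hGfne i (Finset.ne_of_mem_erase hi)]
        exact integral_gaussian β
      rw [Finset.prod_congr rfl hcongr, Finset.prod_const,
        Finset.card_erase_of_mem (Finset.mem_univ 0), Finset.card_univ, Fintype.card_fin]
  rw [hA, hB, hC, hD, hE]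


theorem expectation_exp_neg_beta_var (k : ℕ) (hk : 1 ≤ k) (α β : ℝ)
    (hα0 : 0 < α) (hα : α < 1/2) (hβ : 0 < β)
    (Ω : Type*) [MeasureSpace Ω] [IsProbabilityMeasure (ℙ : Measure Ω)]
    (z : Fin k → Ω → ℝ) (hmeas : ∀ i, Measurable (z i))
    (hindep : iIndepFun z ℙ)
    (hunif : ∀ i, Measure.map (z i) ℙ =
      (ENNReal.ofReal (1 - 2*α))⁻¹ • volume.restrict (Set.Icc (α - 1/2) (1/2 - α))) :
    ∫ ω, Real.exp (-β * ∑ i, (z i ω - (∑ j, z j ω) / k)^2)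
      ≤ (k : ℝ) ^ ((1:ℝ)/2) * (Real.pi / ((1 - 2*α)^2 * β)) ^ (((k:ℝ) - 1)/2) := by
  have hk0 : (0:ℝ) < k := by exact_mod_cast hk
  have hsk : (0:ℝ) < Real.sqrt k := Real.sqrt_pos.mpr hk0
  set c : ℝ := 1 - 2*α with hc
  have hc0 : 0 < c := by rw [hc]; linarith
  set I : Set ℝ := Set.Icc (α - 1/2) (1/2 - α) with hI
  set μ0 : Measure ℝ := (ENNReal.ofReal c)⁻¹ • volume.restrict I with hμ0
  have hvolI : volume I = ENNReal.ofReal c := by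
    rw [hI, Real.volume_Icc]; congr 1; rw [hc]; ring
  have hofc0 : ENNReal.ofReal c ≠ 0 := (ENNReal.ofReal_pos.mpr hc0).ne'
  have hofctop : ENNReal.ofReal c ≠ ⊤ := ENNReal.ofReal_ne_top
  haveI : IsFiniteMeasure μ0 := by
    constructor
    rw [hμ0, Measure.smul_apply, Measure.restrict_apply MeasurableSet.univ,
      Set.univ_inter, hvolI, smul_eq_mul]
    exact ENNReal.mul_lt_top (ENNReal.inv_lt_top.mpr (ENNReal.ofReal_pos.mpr hc0))
      ENNReal.ofReal_lt_top
  set Z : Ω → (Fin k → ℝ) := fun ω i => z i ω with hZdef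
  have hZ : Measurable Z := measurable_pi_lambda _ hmeas
  set f : (Fin k → ℝ) → ℝ := fun x => Real.exp (-β * ∑ i, (x i - (∑ j, x j)/(k:ℝ))^2)
    with hf
  have hfcont : Continuous f := by
    apply Real.continuous_exp.comp
    apply Continuous.mul continuous_const
    exact continuous_finset_sum _ fun i _ => by fun_prop
  -- joint law
  have hmap : Measure.map Z ℙ = Measure.pi (fun _ : Fin k => μ0) := by
    refine (Measure.pi_eq ?_).symm
    intro s hs
    rw [Measure.map_apply hZ (MeasurableSet.univ_pi hs)]
    have hpre : Z ⁻¹' Set.pi Set.univ s = ⋂ i, z i ⁻¹' s i := by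
      ext ω; simp [hZdef, Set.mem_pi]
    rw [hpre, hindep.meas_iInter (fun i => ⟨s i, hs i, rfl⟩)]
    exact Finset.prod_congr rfl fun i _ => by
      rw [← Measure.map_apply (hmeas i) (hs i), hunif i, hμ0]
  set cube : Set (Fin k → ℝ) := Set.pi Set.univ (fun _ => I) with hcube
  have hpi2 : Measure.pi (fun _ : Fin k => μ0)
      = ((ENNReal.ofReal c)⁻¹) ^ k • (volume.restrict cube) := by
    refine Measure.pi_eq ?_
    intro s hs
    rw [Measure.smul_apply, Measure.restrict_apply (MeasurableSet.univ_pi hs), smul_eq_mul]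
    have hcap : Set.pi Set.univ s ∩ cube = Set.pi Set.univ (fun i => s i ∩ I) := by
      rw [hcube, ← Set.pi_inter_distrib]
    rw [hcap, volume_pi_pi]
    have : ∀ i : Fin k, μ0 (s i) = (ENNReal.ofReal c)⁻¹ * volume (s i ∩ I) := by
      intro i
      rw [hμ0, Measure.smul_apply, Measure.restrict_apply (hs i), smul_eq_mul]
    rw [Finset.prod_congr rfl fun i _ => this i, Finset.prod_mul_distrib,
      Finset.prod_const, Finset.card_univ, Fintype.card_fin]
  -- the slab bound
  set c' : ℝ := Real.sqrt k * (1/2 - α) with hc'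
  have hc'0 : 0 ≤ c' := by
    rw [hc']; apply mul_nonneg hsk.le; linarith
  set F : (Fin k → ℝ) → ENNReal := fun x => ENNReal.ofReal
      ((Set.Icc (-c') c').indicator (fun _ => (1:ℝ)) ((∑ i, x i)/Real.sqrt k)
        * Real.exp (-β * ((∑ i, (x i)^2) - ((∑ i, x i)/Real.sqrt k)^2))) with hF
  have hfF : ∀ x ∈ cube, ENNReal.ofReal (f x) ≤ F x := by
    intro x hx
    have hxI : ∀ i, x i ∈ I := fun i => hx i (Set.mem_univ i)
    have hsum_mem : (∑ i, x i)/Real.sqrt k ∈ Set.Icc (-c') c' := by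
      have h1 : ∑ i, x i ≤ (k:ℝ) * (1/2 - α) := by
        calc ∑ i, x i ≤ ∑ _i : Fin k, (1/2 - α) :=
              Finset.sum_le_sum fun i _ => (hxI i).2
          _ = (k:ℝ) * (1/2 - α) := by
              rw [Finset.sum_const, Finset.card_univ, Fintype.card_fin, nsmul_eq_mul]
      have h2 : (k:ℝ) * (α - 1/2) ≤ ∑ i, x i := by
        calc (k:ℝ) * (α - 1/2) = ∑ _i : Fin k, (α - 1/2) := by
              rw [Finset.sum_const, Finset.card_univ, Fintype.card_fin, nsmul_eq_mul]
          _ ≤ ∑ i, x i := Finset.sum_le_sum fun i _ => (hxI i).1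
      have hksq : (k:ℝ) = Real.sqrt k * Real.sqrt k := (Real.mul_self_sqrt hk0.le).symm
      constructor
      · rw [le_div_iff₀ hsk]
        nlinarith [h2, hksq, hsk.le]
      · rw [div_le_iff₀ hsk]
        nlinarith [h1, hksq, hsk.le]
    have hsq : ∑ i, (x i - (∑ j, x j)/(k:ℝ))^2
        = (∑ i, (x i)^2) - ((∑ i, x i)/Real.sqrt k)^2 := sum_sq_dev k hk x
    rw [hf, hF]
    simp only
    rw [Set.indicator_of_mem hsum_mem, one_mul, hsq]
  -- measurability of F
  have msum : Measurable fun x : Fin k → ℝ => ∑ i, x i :=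
    Finset.measurable_sum _ fun i _ => measurable_pi_apply i
  have msumsq : Measurable fun x : Fin k → ℝ => ∑ i, (x i)^2 :=
    Finset.measurable_sum _ fun i _ => (measurable_pi_apply i).pow_const 2
  have hFmeas : Measurable F := by
    apply Measurable.ennreal_ofReal
    apply Measurable.mul
    · exact (Measurable.indicator measurable_const measurableSet_Icc).comp
        (msum.div_const _)
    · exact (((msumsq.sub ((msum.div_const _).pow_const 2)).const_mul (-β)).exp)
  have hLHS : (∫ ω, Real.exp (-β * ∑ i, (z i ω - (∑ j, z j ω) / k)^2))
      = (∫⁻ x, ENNReal.ofReal (f x) ∂(Measure.pi (fun _ : Fin k => μ0))).toReal := by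
    have h1 : (∫ ω, Real.exp (-β * ∑ i, (z i ω - (∑ j, z j ω) / k)^2))
        = ∫ ω, f (Z ω) ∂ℙ := rfl
    rw [h1, ← integral_map hZ.aemeasurable hfcont.aestronglyMeasurable, hmap,
      integral_eq_lintegral_of_nonneg_ae
        (Filter.Eventually.of_forall fun x => (Real.exp_pos _).le)
        hfcont.aestronglyMeasurable]
  have hkey := key_rot k hk β hβ c' hc'0
  have hstep : (∫⁻ x, ENNReal.ofReal (f x) ∂(Measure.pi (fun _ : Fin k => μ0)))
      ≤ ((ENNReal.ofReal c)⁻¹) ^ k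
        * ENNReal.ofReal ((2*c') * Real.sqrt (Real.pi/β) ^ (k-1)) := by
    rw [hpi2, lintegral_smul_measure]
    refine mul_le_mul_right ?_ _
    calc ∫⁻ x in cube, ENNReal.ofReal (f x)
        ≤ ∫⁻ x in cube, F x := by
          refine setLIntegral_mono hFmeas hfF
      _ ≤ ∫⁻ x, F x := setLIntegral_le_lintegral _ _
      _ = ENNReal.ofReal ((2*c') * Real.sqrt (Real.pi/β) ^ (k-1)) := hkey
  have hfin : (((ENNReal.ofReal c)⁻¹) ^ k
      * ENNReal.ofReal ((2*c') * Real.sqrt (Real.pi/β) ^ (k-1))) ≠ ⊤ :=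
    ENNReal.mul_ne_top (ENNReal.pow_ne_top (ENNReal.inv_ne_top.mpr hofc0))
      ENNReal.ofReal_ne_top
  rw [hLHS]
  refine le_trans (ENNReal.toReal_mono hfin hstep) ?_
  rw [ENNReal.toReal_mul, ENNReal.toReal_pow, ENNReal.toReal_inv,
    ENNReal.toReal_ofReal hc0.le, ENNReal.toReal_ofReal (by positivity)]
  -- real algebra
  have e2 : ((k:ℝ)) ^ ((1:ℝ)/2) = Real.sqrt k := (Real.sqrt_eq_rpow _).symm
  have e3 : (Real.pi/(c^2*β)) ^ (((k:ℝ)-1)/2) = (Real.sqrt (Real.pi/β)/c)^(k-1) := by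
    have hn : ((k:ℝ) - 1) = ((k-1 : ℕ) : ℝ) := by
      rw [Nat.cast_sub hk]; norm_num
    have hX : (0:ℝ) ≤ Real.pi/(c^2*β) := by positivity
    rw [hn, show (((k-1:ℕ):ℝ))/2 = (1/2 : ℝ) * ((k-1:ℕ):ℝ) by ring,
      Real.rpow_mul hX, Real.rpow_natCast, ← Real.sqrt_eq_rpow]
    congr 1
    rw [show Real.pi/(c^2*β) = (Real.pi/β)/c^2 by rw [div_div, mul_comm (c^2) β], Real.sqrt_div (by positivity),
      Real.sqrt_sq hc0.le]
  rw [e2, e3]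
  obtain ⟨m, rfl⟩ : ∃ m, k = m + 1 := ⟨k-1, (Nat.succ_pred_eq_of_pos hk).symm⟩
  simp only [Nat.add_sub_cancel]
  apply le_of_eq
  rw [div_pow]
  field_simp
  rw [hc', hc]
  have hc1 : (1 - 2*α) ≠ 0 := by linarith
  have h2 : (1/(1-2*α))^(m+1) * (1-2*α)^(m+1) = 1 := by
    rw [← mul_pow, one_div, inv_mul_cancel₀ hc1, one_pow]
  linear_combination (Real.sqrt ((m+1:ℕ):ℝ)) * h2
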